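/- For each c ∈ (0,1), the calibrator f_c(p) = c·p^{c−1} on (0,1] is nonincreasing in p and satisfies ∫_0^1 f_c(p) dp = 1; moreover the mixture f_m(p) = ∫_0^1 c·p^{c−1} dc equals (1 − p + p log p)/(p (log p)²) for p ∈ (0,1) and also satisfies ∫_0^1 f_m(p) dp = 1. -/

import Mathlib

open Real intervalIntegral Set Filter

lemma numer_nonneg {p : ℝ} (hp : 0 < p) : 0 ≤ 1 - p + p * Real.log p := by
  have h := Real.log_le_sub_one_of_pos (show (0:ℝ) < 1/p by positivity)
  rw [Real.log_div one_ne_zero hp.ne', Real.log_one] at h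
  have : -Real.log p ≤ 1/p - 1 := by linarith
  nlinarith [mul_le_mul_of_nonneg_left this hp.le, mul_one_div_cancel hp.ne']

noncomputable def Gfun : ℝ → ℝ := fun p =>
  if p = 0 then 0 else if p = 1 then 1 else (p - 1) / Real.log p

lemma Gderiv {p : ℝ} (hp : p ∈ Ioo (0:ℝ) 1) :
    HasDerivAt Gfun ((1 - p + p * Real.log p) / (p * (Real.log p)^2)) p := by
  obtain ⟨hp0, hp1⟩ := hp
  have hlog : Real.log p ≠ 0 := ne_of_lt (Real.log_neg hp0 hp1)
  have h : HasDerivAt (fun x => (x - 1) / Real.log x)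
      ((1 * Real.log p - (p - 1) * p⁻¹) / (Real.log p)^2) p :=
    ((hasDerivAt_id p).sub_const 1).div (Real.hasDerivAt_log hp0.ne') hlog
  have hmem : Ioo (0:ℝ) 1 ∈ nhds p := isOpen_Ioo.mem_nhds ⟨hp0, hp1⟩
  have heq : Gfun =ᶠ[nhds p] fun x => (x - 1) / Real.log x := by
    filter_upwards [hmem] with x hx
    simp [Gfun, ne_of_gt hx.1, ne_of_lt hx.2]
  have h2 := h.congr_of_eventuallyEq heq
  convert h2 using 1
  · rfl
  · rfl
  field_simp
  ring

lemma tendsto_G_zero : Tendsto (fun x => (x - 1) / Real.log x) (nhdsWithin 0 (Ioi (0:ℝ))) (nhds 0) := by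
  have h1 : Tendsto (fun x : ℝ => x - 1) (nhdsWithin 0 (Ioi (0:ℝ))) (nhds (-1)) := by
    have h : Tendsto (fun x : ℝ => x - 1) (nhds (0:ℝ)) (nhds (-1)) := by
      simpa using (continuous_sub_right (1:ℝ)).tendsto 0
    exact h.mono_left nhdsWithin_le_nhds
  have h2 : Tendsto (fun x : ℝ => (Real.log x)⁻¹) (nhdsWithin 0 (Ioi (0:ℝ))) (nhds 0) := by
    have ha := (tendsto_neg_atBot_atTop.comp Real.tendsto_log_nhdsGT_zero).inv_tendsto_atTop
    have hb := ha.neg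
    simp only [Pi.inv_apply, Function.comp, neg_neg, inv_neg, neg_zero] at hb ⊢
    simpa using hb
  have := h1.mul h2
  simpa [div_eq_mul_inv] using this

lemma tendsto_G_one : Tendsto (fun x => (x - 1) / Real.log x) (nhdsWithin 1 {(1:ℝ)}ᶜ) (nhds 1) := by
  have hd := Real.hasDerivAt_log one_ne_zero
  rw [hasDerivAt_iff_tendsto_slope] at hd
  have hinv : Tendsto (fun x => (slope Real.log 1 x)⁻¹) (nhdsWithin 1 {(1:ℝ)}ᶜ) (nhds 1) := by
    have := hd.inv₀ (by norm_num)
    simpa using this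
  apply hinv.congr
  intro y
  simp [slope_def_field, Real.log_one, inv_div]

lemma Gcont : ContinuousOn Gfun (Icc (0:ℝ) 1) := by
  intro x hx
  rcases eq_or_ne x 0 with rfl | hx0
  · rw [← continuousWithinAt_diff_self]
    unfold ContinuousWithinAt
    have hG0 : Gfun 0 = 0 := by simp [Gfun]
    rw [hG0]
    have hsub : Tendsto (fun x => (x - 1) / Real.log x)
        (nhdsWithin 0 (Icc (0:ℝ) 1 \ {0})) (nhds 0) :=
      tendsto_G_zero.mono_left (nhdsWithin_mono _ (fun y hy =>
        lt_of_le_of_ne hy.1.1 (Ne.symm (by simpa using hy.2))))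
    apply hsub.congr'
    have hIio : ∀ᶠ y in nhdsWithin 0 (Icc (0:ℝ) 1 \ {0}), y < 1 :=
      eventually_nhdsWithin_of_eventually_nhds
        (eventually_nhds_iff.2 ⟨Iio 1, fun y hy => hy, isOpen_Iio, by norm_num⟩)
    filter_upwards [self_mem_nhdsWithin, hIio] with y hy hlt
    have hy0 : y ≠ 0 := by simpa using hy.2
    simp [Gfun, hy0, ne_of_lt hlt]
  · rcases eq_or_ne x 1 with rfl | hx1
    · rw [← continuousWithinAt_diff_self]
      unfold ContinuousWithinAt
      have hG1 : Gfun 1 = 1 := by simp [Gfun]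
      rw [hG1]
      have hsub : Tendsto (fun x => (x - 1) / Real.log x)
          (nhdsWithin 1 (Icc (0:ℝ) 1 \ {1})) (nhds 1) :=
        tendsto_G_one.mono_left (nhdsWithin_mono _ (fun y hy => by simpa using hy.2))
      apply hsub.congr'
      have hIoi : ∀ᶠ y in nhdsWithin 1 (Icc (0:ℝ) 1 \ {1}), (0:ℝ) < y :=
        eventually_nhdsWithin_of_eventually_nhds
          (eventually_nhds_iff.2 ⟨Ioi 0, fun y hy => hy, isOpen_Ioi, by norm_num⟩)
      filter_upwards [self_mem_nhdsWithin, hIoi] with y hy hpos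
      have hy1 : y ≠ 1 := by simpa using hy.2
      simp [Gfun, ne_of_gt hpos, hy1]
    · have hmem : x ∈ Ioo (0:ℝ) 1 :=
        ⟨lt_of_le_of_ne hx.1 (Ne.symm hx0), lt_of_le_of_ne hx.2 hx1⟩
      exact ((Gderiv hmem).continuousAt).continuousWithinAt

theorem calibrator_properties :
    (∀ c ∈ Set.Ioo (0:ℝ) 1,
      (∀ p ∈ Set.Ioc (0:ℝ) 1, ∀ q ∈ Set.Ioc (0:ℝ) 1, p ≤ q →
        c * q ^ (c - 1) ≤ c * p ^ (c - 1))
      ∧ (∫ p in (0:ℝ)..1, c * p ^ (c - 1)) = 1)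
    ∧ (∀ p ∈ Set.Ioo (0:ℝ) 1,
        (∫ c in (0:ℝ)..1, c * p ^ (c - 1))
          = (1 - p + p * Real.log p) / (p * (Real.log p)^2))
    ∧ (∫ p in (0:ℝ)..1, (1 - p + p * Real.log p) / (p * (Real.log p)^2)) = 1 := by
  refine ⟨fun c hc => ⟨fun p hp q hq hpq => ?_, ?_⟩, fun p hp => ?_, ?_⟩
  · exact mul_le_mul_of_nonneg_left
      (Real.rpow_le_rpow_of_nonpos hp.1 hpq (by linarith [hc.2])) hc.1.le
  · rw [intervalIntegral.integral_const_mul, integral_rpow (Or.inl (by linarith [hc.1]))]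
    rw [sub_add_cancel, Real.one_rpow, Real.zero_rpow hc.1.ne', sub_zero, mul_one_div,
      div_self hc.1.ne']
  · -- mixture formula
    obtain ⟨hp0, hp1⟩ := hp
    set L := Real.log p with hLdef
    have hL : L < 0 := Real.log_neg hp0 hp1
    have hLne : L ≠ 0 := ne_of_lt hL
    set F : ℝ → ℝ := fun c => (c / L - 1 / L ^ 2) * Real.exp (L * (c - 1)) with hF
    have hderiv : ∀ c ∈ uIcc (0:ℝ) 1, HasDerivAt F (c * Real.exp (L * (c - 1))) c := by
      intro c _
      have h1 : HasDerivAt (fun c : ℝ => c / L - 1 / L ^ 2) (1 / L) c :=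
        ((hasDerivAt_id c).div_const L).sub_const (1 / L ^ 2)
      have h2 : HasDerivAt (fun c : ℝ => Real.exp (L * (c - 1)))
          (Real.exp (L * (c - 1)) * L) c := by
        have hin : HasDerivAt (fun c : ℝ => L * (c - 1)) L c := by
          simpa using ((hasDerivAt_id c).sub_const 1).const_mul L
        exact hin.exp
      have := h1.mul h2
      convert this using 1
      · rfl
      · rfl
      · rfl
      field_simp
      ring
    have hint : IntervalIntegrable (fun c => c * Real.exp (L * (c - 1))) MeasureTheory.volume 0 1 :=
      (continuous_id.mul (Real.continuous_exp.comp
        ((continuous_const.mul (continuous_id.sub continuous_const))))).intervalIntegrable 0 1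
    have hFTC := intervalIntegral.integral_eq_sub_of_hasDerivAt hderiv hint
    have hcongr : (∫ c in (0:ℝ)..1, c * p ^ (c - 1))
        = ∫ c in (0:ℝ)..1, c * Real.exp (L * (c - 1)) := by
      apply intervalIntegral.integral_congr
      intro c _
      simp only [Real.rpow_def_of_pos hp0, ← hLdef]
    rw [hcongr, hFTC, hF]
    have hexp : Real.exp (L * ((0:ℝ) - 1)) = p⁻¹ := by
      rw [show L * ((0:ℝ) - 1) = -L by ring, Real.exp_neg, hLdef, Real.exp_log hp0]
    simp only [hexp]
    rw [show L * ((1:ℝ) - 1) = 0 by ring, Real.exp_zero]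
    field_simp
    ring
  · -- total integral of the mixture
    have hderiv : ∀ x ∈ Ioo (0:ℝ) 1,
        HasDerivAt Gfun ((1 - x + x * Real.log x) / (x * (Real.log x)^2)) x :=
      fun x hx => Gderiv hx
    have hnonneg : ∀ x ∈ Ioo (0:ℝ) 1,
        0 ≤ (1 - x + x * Real.log x) / (x * (Real.log x)^2) :=
      fun x hx => div_nonneg (numer_nonneg hx.1) (mul_nonneg hx.1.le (sq_nonneg _))
    have hint : IntervalIntegrable (fun x => (1 - x + x * Real.log x) / (x * (Real.log x)^2))
        MeasureTheory.volume 0 1 := by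
      apply intervalIntegrable_deriv_of_nonneg (g := Gfun)
      · simpa using Gcont
      · simpa using hderiv
      · simpa using hnonneg
    have := intervalIntegral.integral_eq_sub_of_hasDeriv_right_of_le zero_le_one
      (by simpa using Gcont) (fun x hx => (hderiv x hx).hasDerivWithinAt) hint
    rw [this]
    simp [Gfun]
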